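/- Let R be a commutative ring, I a finitely generated faithful ideal generated by x_1,…,x_n, and set cTr(R/I) = R^n / K where K is the cyclic submodule generated by (x_1,…,x_n). Then cTr(R/I) is a finitely presented R-module of projective dimension at most 1, and an R-module M satisfies Ext^1_R(cTr(R/I), M) = 0 if and only if M = IM. -/

import Mathlib

universe u

/-- `ExtVanishes R T N` encodes `Ext¹_R(T, N) = 0`: every short exact sequence
`0 → N → E → T → 0` splits, i.e. every surjection onto `T` with kernel
isomorphic to `N` admits a section. -/
def ExtVanishes (R : Type u) [Ring R] (T : Type u) [AddCommGroup T]
    [Module R T] (N : Type u) [AddCommGroup N] [Module R N] : Prop :=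
  ∀ (E : Type u) [AddCommGroup E] [Module R E] (π : E →ₗ[R] T),
    Function.Surjective π → Nonempty (↥(LinearMap.ker π) ≃ₗ[R] N) →
    ∃ σ : T →ₗ[R] E, π ∘ₗ σ = LinearMap.id

variable {R : Type u} [CommRing R] {n : ℕ} {x : Fin n → R} {I : Ideal R}

/-- Elementwise characterization of `I • ⊤`. -/
lemma aux_mem_Ismul (hI : I = Ideal.span (Set.range x))
    {M : Type u} [AddCommGroup M] [Module R M] (m : M) :
    m ∈ I • (⊤ : Submodule R M) ↔ ∃ w : Fin n → M, ∑ i, x i • w i = m := by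
  constructor
  · intro hm
    refine Submodule.smul_induction_on hm ?_ ?_
    · intro a ha mm _
      rw [hI] at ha
      obtain ⟨c, rfl⟩ := Submodule.mem_span_range_iff_exists_fun R |>.mp ha
      refine ⟨fun i => c i • mm, ?_⟩
      rw [Finset.sum_smul]
      exact Finset.sum_congr rfl fun i _ => by rw [smul_assoc, smul_comm]
    · rintro y z ⟨w, rfl⟩ ⟨w', rfl⟩
      exact ⟨w + w', by simp [Finset.sum_add_distrib]⟩
  · rintro ⟨w, rfl⟩
    refine Submodule.sum_mem _ fun i _ => Submodule.smul_mem_smul ?_ trivial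
    rw [hI]; exact Ideal.subset_span ⟨i, rfl⟩

/-- Faithfulness implies `r • x = 0 → r = 0`. -/
lemma aux_reg (hI : I = Ideal.span (Set.range x))
    (hfaithful : ∀ r : R, (∀ y ∈ I, r * y = 0) → r = 0)
    {r : R} (h : r • x = 0) : r = 0 := by
  apply hfaithful
  intro y hy
  rw [hI] at hy
  refine Submodule.span_induction (fun z hz => ?_) (by simp) (fun a b _ _ ha hb => by
    rw [mul_add, ha, hb, add_zero]) (fun c a _ ha => by
    rw [smul_eq_mul, mul_left_comm, ha, mul_zero]) hy
  obtain ⟨i, rfl⟩ := hz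
  have := congrFun h i
  simpa using this

local notation "K" => LinearMap.range (LinearMap.toSpanSingleton R (Fin n → R) x)

lemma aux_x_mem_K : x ∈ LinearMap.range (LinearMap.toSpanSingleton R (Fin n → R) x) :=
  ⟨1, one_smul R x⟩

lemma aux_sum_single : ∑ i, (Pi.single i (x i) : Fin n → R) = x :=
  Finset.univ_sum_single x

lemma aux_ext_of_div (hI : I = Ideal.span (Set.range x))
    {M : Type u} [AddCommGroup M] [Module R M]
    (hdiv : I • (⊤ : Submodule R M) = ⊤) :
    ExtVanishes R ((Fin n → R) ⧸ LinearMap.range (LinearMap.toSpanSingleton R (Fin n → R) x)) M := by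
  set Q := LinearMap.range (LinearMap.toSpanSingleton R (Fin n → R) x)
  intro E _ _ π hπ hne
  obtain ⟨e⟩ := hne
  -- lift the standard basis
  have hu : ∀ i : Fin n, ∃ u : E, π u = Q.mkQ (Pi.single i 1) := fun i => hπ _
  choose u hu using hu
  set f : (Fin n → R) →ₗ[R] E :=
    ∑ i, (LinearMap.proj i : (Fin n → R) →ₗ[R] R).smulRight (u i) with hf
  have hfapp : ∀ v : Fin n → R, f v = ∑ i, v i • u i := by
    intro v; simp [hf, LinearMap.sum_apply]
  have hπf : ∀ v : Fin n → R, π (f v) = Q.mkQ v := by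
    intro v
    rw [hfapp, map_sum]
    have : ∀ i, π (v i • u i) = Q.mkQ (Pi.single i (v i)) := by
      intro i
      rw [map_smul, hu i, ← map_smul]
      congr 1
      rw [← Pi.single_smul, smul_eq_mul, mul_one]
    simp_rw [this, ← map_sum, Finset.univ_sum_single]
  have hfx : f x ∈ LinearMap.ker π := by
    rw [LinearMap.mem_ker, hπf, Submodule.mkQ_apply, Submodule.Quotient.mk_eq_zero]
    exact aux_x_mem_K
  -- use divisibility on e ⟨f x, hfx⟩
  have hmem : e ⟨f x, hfx⟩ ∈ I • (⊤ : Submodule R M) := by rw [hdiv]; exact Submodule.mem_top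
  obtain ⟨w, hw⟩ := (aux_mem_Ismul hI _).mp hmem
  set k : Fin n → LinearMap.ker π := fun i => e.symm (w i) with hk
  have hk0 : ∑ i, x i • k i = ⟨f x, hfx⟩ := by
    apply e.injective
    rw [map_sum]
    simp_rw [map_smul, hk, e.apply_symm_apply]
    exact hw
  set f' : (Fin n → R) →ₗ[R] E :=
    f - ∑ i, (LinearMap.proj i : (Fin n → R) →ₗ[R] R).smulRight ((k i : E)) with hf'
  have hf'app : ∀ v : Fin n → R, f' v = f v - ∑ i, v i • (k i : E) := by
    intro v; simp [hf', LinearMap.sum_apply]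
  have hπf' : ∀ v : Fin n → R, π (f' v) = Q.mkQ v := by
    intro v
    rw [hf'app, map_sub, hπf, map_sum]
    have : ∀ i, π (v i • (k i : E)) = 0 := fun i => by
      rw [map_smul, (k i).2, smul_zero]
    simp [this]
  have hf'x : f' x = 0 := by
    rw [hf'app]
    have : (∑ i, x i • (k i : E)) = f x := by
      have := congrArg (Subtype.val) hk0
      simpa using this
    rw [this, sub_self]
  have hle : Q ≤ LinearMap.ker f' := by
    rintro y ⟨r, rfl⟩
    rw [LinearMap.mem_ker]
    show f' (r • x) = 0
    rw [map_smul, hf'x, smul_zero]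
  refine ⟨Q.liftQ f' hle, ?_⟩
  apply Submodule.linearMap_qext
  ext v
  simp only [LinearMap.comp_apply, Submodule.mkQ_apply, Submodule.liftQ_apply, LinearMap.id_apply]
  exact hπf' _

lemma aux_div_of_ext (hI : I = Ideal.span (Set.range x))
    (hfaithful : ∀ r : R, (∀ y ∈ I, r * y = 0) → r = 0)
    {M : Type u} [AddCommGroup M] [Module R M]
    (hext : ExtVanishes R
      ((Fin n → R) ⧸ LinearMap.range (LinearMap.toSpanSingleton R (Fin n → R) x)) M) :
    I • (⊤ : Submodule R M) = ⊤ := by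
  set Q := LinearMap.range (LinearMap.toSpanSingleton R (Fin n → R) x) with hQ
  rw [eq_top_iff]
  intro m _
  rw [aux_mem_Ismul hI]
  -- build the pushout extension
  set N : Submodule R ((Fin n → R) × M) :=
    LinearMap.range (LinearMap.toSpanSingleton R ((Fin n → R) × M) (x, -m)) with hN
  have hNker : N ≤ LinearMap.ker (Q.mkQ ∘ₗ LinearMap.fst R (Fin n → R) M) := by
    rintro p ⟨r, rfl⟩
    show Q.mkQ ((r • (x, -m)).1) = 0
    rw [Prod.smul_fst, Submodule.mkQ_apply, Submodule.Quotient.mk_eq_zero]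
    exact Q.smul_mem r aux_x_mem_K
  set π : (((Fin n → R) × M) ⧸ N) →ₗ[R] ((Fin n → R) ⧸ Q) :=
    N.liftQ (Q.mkQ ∘ₗ LinearMap.fst R (Fin n → R) M) hNker with hπdef
  have hπmk : ∀ p : (Fin n → R) × M, π (N.mkQ p) = Q.mkQ p.1 := fun p => rfl
  have hπs : Function.Surjective π := by
    intro c
    obtain ⟨v, rfl⟩ := Q.mkQ_surjective c
    exact ⟨N.mkQ (v, 0), hπmk (v, 0)⟩
  set ι : M →ₗ[R] (((Fin n → R) × M) ⧸ N) := N.mkQ ∘ₗ LinearMap.inr R (Fin n → R) M with hιdef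
  have hιmk : ∀ m' : M, ι m' = N.mkQ (0, m') := fun m' => rfl
  have hιinj : Function.Injective ι := by
    rw [injective_iff_map_eq_zero]
    intro m' h0
    rw [hιmk, Submodule.mkQ_apply, Submodule.Quotient.mk_eq_zero] at h0
    obtain ⟨r, hr⟩ := h0
    have hx0 : r • x = 0 := congrArg Prod.fst hr
    have hr0 : r = 0 := aux_reg hI hfaithful hx0
    have := congrArg Prod.snd hr
    simp only [Prod.smul_snd] at this
    rw [← this, hr0]
    simp
  have hker : LinearMap.ker π = LinearMap.range ι := by
    apply le_antisymm
    · intro z hz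
      obtain ⟨p, rfl⟩ := N.mkQ_surjective z
      rw [LinearMap.mem_ker, hπmk, Submodule.mkQ_apply, Submodule.Quotient.mk_eq_zero] at hz
      obtain ⟨r, hr⟩ := hz
      refine ⟨p.2 + r • m, ?_⟩
      rw [hιmk]
      rw [Submodule.mkQ_apply, Submodule.mkQ_apply, Submodule.Quotient.eq]
      refine ⟨-r, ?_⟩
      show -r • (x, -m) = (0, p.2 + r • m) - p
      have h1 : r • x = p.1 := hr
      rw [Prod.ext_iff]
      refine ⟨?_, ?_⟩
      · show -r • x = ((0, p.2 + r • m) - p).1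
        simp [Prod.fst_sub, h1]
      · show -r • -m = ((0, p.2 + r • m) - p).2
        simp [Prod.snd_sub]
    · rintro _ ⟨m', rfl⟩
      rw [LinearMap.mem_ker, hιmk, hπmk]
      simp
  have e : (↥(LinearMap.ker π) ≃ₗ[R] M) :=
    (LinearEquiv.ofEq _ _ hker).trans (LinearEquiv.ofInjective ι hιinj).symm
  obtain ⟨σ, hσ⟩ := hext (((Fin n → R) × M) ⧸ N) π hπs ⟨e⟩
  have hσπ : ∀ c, π (σ c) = c := fun c => congrArg (· c) hσ
  -- the defect of the splitting on basis vectors lands in ker π = range ι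
  have hd : ∀ i : Fin n, ∃ w : M,
      ι w = σ (Q.mkQ (Pi.single i 1)) - N.mkQ (Pi.single i 1, 0) := by
    intro i
    have : σ (Q.mkQ (Pi.single i 1)) - N.mkQ (Pi.single i 1, 0) ∈ LinearMap.ker π := by
      rw [LinearMap.mem_ker, map_sub, hσπ, hπmk, sub_self]
    rw [hker] at this
    exact this
  choose w hw using hd
  refine ⟨fun i => -w i, ?_⟩
  -- key computation
  have hsum : ∑ i, x i • (σ (Q.mkQ (Pi.single i 1)) - N.mkQ (Pi.single i 1, 0)) = -ι m := by
    have h1 : ∑ i, x i • σ (Q.mkQ (Pi.single i 1)) = 0 := by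
      have : ∑ i, x i • σ (Q.mkQ (Pi.single i 1)) = σ (Q.mkQ (∑ i, Pi.single i (x i))) := by
        rw [map_sum (Q.mkQ), map_sum σ]
        refine Finset.sum_congr rfl fun i _ => ?_
        rw [← map_smul, ← map_smul]
        congr 2
        rw [← Pi.single_smul, smul_eq_mul, mul_one]
      rw [this, Finset.univ_sum_single]
      have : Q.mkQ x = 0 := by
        rw [Submodule.mkQ_apply, Submodule.Quotient.mk_eq_zero]; exact aux_x_mem_K
      rw [this, map_zero]
    have h2 : ∑ i, x i • N.mkQ ((Pi.single i 1 : Fin n → R), (0 : M)) = ι m := by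
      have hsmul : ∀ i : Fin n, (x i • ((Pi.single i 1 : Fin n → R), (0:M)))
          = ((Pi.single i (x i) : Fin n → R), (0:M)) := by
        intro i
        rw [Prod.smul_mk, smul_zero, ← Pi.single_smul, smul_eq_mul, mul_one]
      have : ∑ i, x i • N.mkQ ((Pi.single i 1 : Fin n → R), (0 : M)) = N.mkQ (x, 0) := by
        simp_rw [← map_smul, hsmul, ← map_sum]
        congr 1
        rw [Prod.ext_iff]
        refine ⟨?_, ?_⟩
        · simp [Prod.fst_sum, Finset.univ_sum_single]
        · simp [Prod.snd_sum]
      rw [this]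
      rw [hιmk, Submodule.mkQ_apply, Submodule.mkQ_apply, Submodule.Quotient.eq]
      exact ⟨1, by
        rw [LinearMap.toSpanSingleton_apply, one_smul, Prod.mk_sub_mk, sub_zero, zero_sub]⟩
    calc ∑ i, x i • (σ (Q.mkQ (Pi.single i 1)) - N.mkQ (Pi.single i 1, 0))
        = ∑ i, (x i • σ (Q.mkQ (Pi.single i 1)) - x i • N.mkQ (Pi.single i 1, 0)) := by
          refine Finset.sum_congr rfl fun i _ => smul_sub _ _ _
      _ = (∑ i, x i • σ (Q.mkQ (Pi.single i 1))) - ∑ i, x i • N.mkQ (Pi.single i 1, 0) :=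
          Finset.sum_sub_distrib _ _
      _ = -ι m := by rw [h1, h2, zero_sub]
  have hsum' : ι (∑ i, x i • w i) = -ι m := by
    rw [map_sum]
    simp_rw [map_smul, hw]
    exact hsum
  have : ∑ i, x i • w i = -m := by
    apply hιinj
    rw [hsum', map_neg]
  calc ∑ i, x i • -w i = -∑ i, x i • w i := by
        simp [smul_neg]
    _ = m := by rw [this, neg_neg]


/-- Let `R` be a commutative ring, `I` a finitely generated
faithful ideal generated by `x 0, …, x (n-1)`, and let
`cTr(R/I) = R^n / R·(x 0, …, x (n-1))`.  Then `cTr(R/I)` is a finitely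
presented module of projective dimension at most `1` (the kernel of the
projection from the free module `R^n` is projective), and for every module
`M` one has `Ext¹_R(cTr(R/I), M) = 0` iff `M = IM`. -/
theorem ctr_fp_pd_le_one_and_ext_vanishes_iff_divisible
    (R : Type u) [CommRing R] (n : ℕ) (x : Fin n → R) (I : Ideal R)
    (hI : I = Ideal.span (Set.range x))
    (hfaithful : ∀ r : R, (∀ y ∈ I, r * y = 0) → r = 0) :
    Module.FinitePresentation R
      ((Fin n → R) ⧸ LinearMap.range (LinearMap.toSpanSingleton R (Fin n → R) x)) ∧
    Module.Projective R
      ↥(LinearMap.range (LinearMap.toSpanSingleton R (Fin n → R) x)) ∧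
    ∀ (M : Type u) [AddCommGroup M] [Module R M],
      ExtVanishes R
          ((Fin n → R) ⧸ LinearMap.range (LinearMap.toSpanSingleton R (Fin n → R) x)) M
        ↔ I • (⊤ : Submodule R M) = ⊤ := by
  refine ⟨?_, ?_, ?_⟩
  · refine Module.finitePresentation_of_surjective
      (LinearMap.range (LinearMap.toSpanSingleton R (Fin n → R) x)).mkQ
      (Submodule.mkQ_surjective _) ?_
    rw [Submodule.ker_mkQ, ← LinearMap.span_singleton_eq_range]
    exact Submodule.fg_span_singleton x
  · have hinj : Function.Injective (LinearMap.toSpanSingleton R (Fin n → R) x) := by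
      rw [injective_iff_map_eq_zero]
      intro r hr
      exact aux_reg hI hfaithful hr
    exact Module.Projective.of_equiv (LinearEquiv.ofInjective _ hinj)
  · intro M _ _
    exact ⟨fun h => aux_div_of_ext hI hfaithful h, fun h => aux_ext_of_div hI h⟩
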